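/- arXiv:astro-ph/0008239 — 4 statements merged into one kernel-verified Lean document; each statement's English description precedes it below -/
import Mathlib

section
/- Let R be a p×p Hermitian positive definite complex matrix and a a nonzero vector in ℂ^p. Then for every w ∈ ℂ^p with wᴴ a = 1 one has wᴴ R w ≥ 1/(aᴴ R⁻¹ a), and equality holds for the MVDR beamformer w₀ = R⁻¹ a / (aᴴ R⁻¹ a) (which satisfies w₀ᴴ a = 1). In particular the minimum output power of the distortionless beamformer is 1/(aᴴ R⁻¹ a). -/
open Matrix
open scoped ComplexOrder

/-- MVDR: for Hermitian positive definite `R` and `a ≠ 0`, every beamformer `w` with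
`wᴴ a = 1` has output power `wᴴ R w ≥ 1/(aᴴ R⁻¹ a)`, with equality for the MVDR
beamformer `w₀ = R⁻¹ a / (aᴴ R⁻¹ a)`, which is distortionless (`w₀ᴴ a = 1`). -/
theorem stmt8 (p : ℕ) (R : Matrix (Fin p) (Fin p) ℂ) (hR : R.PosDef)
    (a : Fin p → ℂ) (ha : a ≠ 0) :
    (∀ w : Fin p → ℂ, star w ⬝ᵥ a = 1 →
        (star a ⬝ᵥ (R⁻¹ *ᵥ a))⁻¹ ≤ star w ⬝ᵥ (R *ᵥ w))
    ∧ star ((star a ⬝ᵥ (R⁻¹ *ᵥ a))⁻¹ • (R⁻¹ *ᵥ a)) ⬝ᵥ a = 1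
    ∧ star ((star a ⬝ᵥ (R⁻¹ *ᵥ a))⁻¹ • (R⁻¹ *ᵥ a)) ⬝ᵥ
        (R *ᵥ ((star a ⬝ᵥ (R⁻¹ *ᵥ a))⁻¹ • (R⁻¹ *ᵥ a)))
      = (star a ⬝ᵥ (R⁻¹ *ᵥ a))⁻¹ := by
  set u : Fin p → ℂ := R⁻¹ *ᵥ a with hu
  set c : ℂ := star a ⬝ᵥ u with hc
  have hcpos : 0 < c := hR.inv.dotProduct_mulVec_pos ha
  have hc0 : c ≠ 0 := ne_of_gt hcpos
  have hcstar : star c = c := by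
    have := hcpos.le
    rw [Complex.le_def] at this
    rw [Complex.ext_iff]
    simp [Complex.conj_re, Complex.conj_im, ← this.2]
  have h1 : R *ᵥ u = a := by
    rw [hu, mulVec_mulVec, Matrix.mul_nonsing_inv R (isUnit_iff_isUnit_det R |>.1 hR.isUnit),
      one_mulVec]
  have h2 : star u ⬝ᵥ a = c := by
    rw [star_dotProduct u a, ← hc, hcstar]
  have h2' : star u ⬝ᵥ (R *ᵥ u) = c := by rw [h1, h2]
  refine ⟨?_, ?_, ?_⟩
  · intro w hw
    have h3 : star w ⬝ᵥ (R *ᵥ u) = 1 := by rw [h1, hw]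
    have h4 : star u ⬝ᵥ (R *ᵥ w) = 1 := by
      rw [star_dotProduct, star_mulVec, ← dotProduct_mulVec, hR.1, h3, star_one]
    have key : star (w - c⁻¹ • u) ⬝ᵥ (R *ᵥ (w - c⁻¹ • u))
        = star w ⬝ᵥ (R *ᵥ w) - c⁻¹ := by
      have hsc : star (c⁻¹) = c⁻¹ := by rw [star_inv₀, hcstar]
      simp only [star_sub, star_smul, sub_dotProduct, dotProduct_sub, mulVec_sub,
        mulVec_smul, smul_dotProduct, dotProduct_smul, smul_eq_mul, hsc, h2', h3, h4]
      field_simp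
      ring
    have hps := hR.posSemidef.dotProduct_mulVec_nonneg (w - c⁻¹ • u)
    rw [key, le_sub_iff_add_le, zero_add] at hps
    exact hps
  · rw [star_smul, smul_dotProduct, h2, smul_eq_mul, star_inv₀, hcstar,
      inv_mul_cancel₀ hc0]
  · simp only [star_smul, smul_dotProduct, mulVec_smul, dotProduct_smul, smul_eq_mul,
      star_inv₀, hcstar, h2']
    field_simp
end

section
/- Let X be a p×p Hermitian complex matrix whose largest eigenvalue λ₁ is nonnegative, and let v₁ be a unit eigenvector of X for λ₁. Then g₀ = √λ₁ · v₁ minimizes ‖X − g gᴴ‖_F over all vectors g ∈ ℂ^p: for every g ∈ ℂ^p, ‖X − g gᴴ‖_F ≥ ‖X − λ₁ v₁ v₁ᴴ‖_F. That is, the best Hermitian rank-one (of the form g gᴴ) approximation of X in Frobenius norm is λ₁ v₁ v₁ᴴ. -/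
open Matrix

lemma rayleigh {p : ℕ} (X : Matrix (Fin p) (Fin p) ℂ) (hX : X.IsHermitian) (l1 : ℝ)
    (hMax : ∀ (μ : ℝ) (x : Fin p → ℂ), x ≠ 0 → X *ᵥ x = (μ : ℂ) • x → μ ≤ l1)
    (g : Fin p → ℂ) :
    (star g ⬝ᵥ (X *ᵥ g)).re ≤ l1 * (star g ⬝ᵥ g).re := by
  classical
  set b := hX.eigenvectorBasis with hb
  set u : Fin p → Fin p → ℂ := fun i => ⇑(b i) with hu
  set G : EuclideanSpace ℂ (Fin p) := (WithLp.equiv 2 _).symm g with hG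
  set c : Fin p → ℂ := fun i => inner ℂ (b i) G with hc
  have hval : ∀ i, hX.eigenvalues i ≤ l1 := by
    intro i
    refine hMax _ (u i) ?_ ?_
    · have h0 := b.orthonormal.ne_zero i
      intro h
      exact h0 (by ext j; exact congrFun h j)
    · rw [show ((hX.eigenvalues i : ℂ) • u i) = hX.eigenvalues i • u i from
        funext fun j => Complex.real_smul.symm, hu]
      exact hX.mulVec_eigenvectorBasis i
  have hmv : ∀ i, X *ᵥ u i = fun j => (hX.eigenvalues i : ℂ) * u i j := by
    intro i
    rw [hu]
    rw [hX.mulVec_eigenvectorBasis i]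
    exact funext fun j => Complex.real_smul
  have hci : ∀ i, c i = star (u i) ⬝ᵥ g := fun i => by
    simp [hc, hu, hG, dotProduct, PiLp.inner_apply, mul_comm]
  have hrepr : g = ∑ i, c i • u i := by
    have h := congrArg WithLp.ofLp (b.sum_repr' G).symm
    simpa [hG, hc, hu] using h
  -- orthonormality in dotProduct form
  have horth : ∀ i j, star (u i) ⬝ᵥ u j = if i = j then 1 else 0 := by
    intro i j
    have h1 := b.orthonormal.2 (i := i) (j := j)
    have h2 : (inner ℂ (b i) (b j) : ℂ) = star (u i) ⬝ᵥ u j := by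
      simp [hu, dotProduct, PiLp.inner_apply, mul_comm]
    by_cases hij : i = j
    · subst hij
      rw [if_pos rfl, ← h2]
      have := b.orthonormal.1 i
      rw [@inner_self_eq_norm_sq_to_K ℂ] at *
      rw [this]; norm_num
    · rw [if_neg hij, ← h2, h1 hij]
  have hdotsum : ∀ (f : Fin p → Fin p → ℂ), star g ⬝ᵥ (∑ i, f i) = ∑ i, star g ⬝ᵥ f i := by
    intro f
    simp only [dotProduct, Finset.sum_apply, Finset.mul_sum]
    rw [Finset.sum_comm]
  have hXg : X *ᵥ g = ∑ i, (c i * (hX.eigenvalues i : ℂ)) • u i := by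
    conv_lhs => rw [hrepr]
    rw [show X *ᵥ (∑ i, c i • u i) = ∑ i, X *ᵥ (c i • u i) from
      map_sum (Matrix.mulVecLin X) _ _]
    refine Finset.sum_congr rfl fun i _ => ?_
    rw [mulVec_smul, hmv i]
    ext j
    simp [mul_assoc]
  have hgu : ∀ i, star g ⬝ᵥ u i = star (c i) := by
    intro i
    rw [star_dotProduct, hci i]
  have hdot1 : star g ⬝ᵥ (X *ᵥ g) = ∑ i, (hX.eigenvalues i : ℂ) * Complex.normSq (c i) := by
    rw [hXg, hdotsum]
    refine Finset.sum_congr rfl fun i _ => ?_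
    rw [dotProduct_smul, smul_eq_mul, hgu i]
    have hcc : c i * star (c i) = (Complex.normSq (c i) : ℂ) := Complex.mul_conj (c i)
    rw [mul_comm (c i), mul_assoc, hcc]
  have hdot2 : star g ⬝ᵥ g = ∑ i, (Complex.normSq (c i) : ℂ) := by
    nth_rewrite 2 [hrepr]
    rw [hdotsum]
    refine Finset.sum_congr rfl fun i _ => ?_
    rw [dotProduct_smul, smul_eq_mul, hgu i]
    exact Complex.mul_conj (c i)
  rw [hdot1, hdot2]
  rw [Complex.re_sum, Complex.re_sum]
  have : ∀ i : Fin p, ((hX.eigenvalues i : ℂ) * (Complex.normSq (c i) : ℂ)).re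
      = hX.eigenvalues i * Complex.normSq (c i) := by
    intro i
    rw [← Complex.ofReal_mul, Complex.ofReal_re]
  simp only [this, Complex.ofReal_re]
  rw [Finset.mul_sum]
  exact Finset.sum_le_sum fun i _ =>
    mul_le_mul_of_nonneg_right (hval i) (Complex.normSq_nonneg _)


/-- If `X` is Hermitian with largest eigenvalue `λ₁ ≥ 0` and unit eigenvector `v₁`, then
`λ₁ v₁ v₁ᴴ` is the best approximation of `X` in Frobenius norm among all matrices of the
form `g gᴴ`. -/
theorem stmt10 (p : ℕ) (X : Matrix (Fin p) (Fin p) ℂ) (hX : X.IsHermitian)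
    (l1 : ℝ) (hl1 : 0 ≤ l1) (v1 : Fin p → ℂ)
    (hv1 : star v1 ⬝ᵥ v1 = 1) (hEig : X *ᵥ v1 = (l1 : ℂ) • v1)
    (hMax : ∀ (μ : ℝ) (x : Fin p → ℂ), x ≠ 0 → X *ᵥ x = (μ : ℂ) • x → μ ≤ l1)
    (g : Fin p → ℂ) :
    Real.sqrt (∑ i, ∑ j, ‖(X - (l1 : ℂ) • vecMulVec v1 (star v1)) i j‖ ^ 2)
      ≤ Real.sqrt (∑ i, ∑ j, ‖(X - vecMulVec g (star g)) i j‖ ^ 2) := by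
  classical
  apply Real.sqrt_le_sqrt
  have pt : ∀ a b : ℂ, ‖a - b‖ ^ 2
      = ‖a‖ ^ 2 - 2 * ((starRingEnd ℂ) a * b).re + ‖b‖ ^ 2 := by
    intro a b
    simp only [Complex.sq_norm, Complex.normSq_apply, Complex.sub_re, Complex.sub_im,
      Complex.mul_re, Complex.conj_re, Complex.conj_im]
    ring
  have expand : ∀ B : Matrix (Fin p) (Fin p) ℂ,
      ∑ i, ∑ j, ‖(X - B) i j‖ ^ 2
        = (∑ i, ∑ j, ‖X i j‖ ^ 2)
          - 2 * (∑ i, ∑ j, ((starRingEnd ℂ) (X i j) * B i j).re)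
          + ∑ i, ∑ j, ‖B i j‖ ^ 2 := by
    intro B
    simp only [Matrix.sub_apply, pt, Finset.sum_add_distrib, Finset.sum_sub_distrib,
      ← Finset.mul_sum]
  have hXc : ∀ i j, (starRingEnd ℂ) (X i j) = X j i := by
    intro i j
    have := congrFun (congrFun hX.symm j) i
    rw [conjTranspose_apply] at this
    exact this.symm
  have crossC : ∀ w : Fin p → ℂ,
      ∑ i, ∑ j, (starRingEnd ℂ) (X i j) * (vecMulVec w (star w)) i j
        = star w ⬝ᵥ (X *ᵥ w) := by
    intro w
    simp only [vecMulVec_apply, hXc, dotProduct, mulVec, Pi.star_apply]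
    rw [Finset.sum_comm]
    refine Finset.sum_congr rfl fun j _ => ?_
    simp only [dotProduct, Finset.mul_sum, Finset.sum_mul]
    refine Finset.sum_congr rfl fun i _ => ?_
    ring
  have crossRe : ∀ w : Fin p → ℂ,
      ∑ i, ∑ j, ((starRingEnd ℂ) (X i j) * (vecMulVec w (star w)) i j).re
        = (star w ⬝ᵥ (X *ᵥ w)).re := by
    intro w
    rw [← crossC w, Complex.re_sum]
    exact Finset.sum_congr rfl fun i _ => (Complex.re_sum _ _).symm
  have normterm : ∀ w : Fin p → ℂ,
      ∑ i, ∑ j, ‖(vecMulVec w (star w)) i j‖ ^ 2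
        = (∑ i, Complex.normSq (w i)) ^ 2 := by
    intro w
    have : ∀ i j : Fin p, ‖(vecMulVec w (star w)) i j‖ ^ 2
        = Complex.normSq (w i) * Complex.normSq (w j) := by
      intro i j
      simp only [vecMulVec_apply, Pi.star_apply, Complex.star_def, Complex.sq_norm,
        Complex.normSq_mul, Complex.normSq_conj]
    simp only [this, ← Finset.mul_sum, ← Finset.sum_mul, sq]
  -- value of t and relation to dot product
  set t : ℝ := ∑ i, Complex.normSq (g i) with htdef
  have hdotg : (star g ⬝ᵥ g).re = t := by
    rw [dotProduct, Complex.re_sum]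
    refine Finset.sum_congr rfl fun i _ => ?_
    simp [Complex.normSq_apply, Complex.mul_re]
  have ht0 : 0 ≤ t := Finset.sum_nonneg fun i _ => Complex.normSq_nonneg _
  have hRay : (star g ⬝ᵥ (X *ᵥ g)).re ≤ l1 * t := by
    have := rayleigh X hX l1 hMax g
    rwa [hdotg] at this
  -- v1 side values
  have hnv1 : ∑ i, Complex.normSq (v1 i) = 1 := by
    have : (star v1 ⬝ᵥ v1).re = 1 := by rw [hv1]; simp
    rw [dotProduct, Complex.re_sum] at this
    rw [← this]
    refine Finset.sum_congr rfl fun i _ => ?_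
    simp [Complex.normSq_apply, Complex.mul_re]
  have hv1dot : star v1 ⬝ᵥ (X *ᵥ v1) = (l1 : ℂ) := by
    rw [hEig, dotProduct_smul, hv1, smul_eq_mul, mul_one]
  -- compute the two sides
  have hB0cross : ∑ i, ∑ j,
      ((starRingEnd ℂ) (X i j) * ((l1 : ℂ) • vecMulVec v1 (star v1)) i j).re
        = l1 * l1 := by
    have : ∀ i j : Fin p, ((starRingEnd ℂ) (X i j) * ((l1 : ℂ) • vecMulVec v1 (star v1)) i j)
        = (l1 : ℂ) * ((starRingEnd ℂ) (X i j) * (vecMulVec v1 (star v1)) i j) := by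
      intro i j
      simp [Matrix.smul_apply, smul_eq_mul]
      ring
    calc ∑ i, ∑ j, ((starRingEnd ℂ) (X i j) * ((l1 : ℂ) • vecMulVec v1 (star v1)) i j).re
        = ((l1 : ℂ) * ∑ i, ∑ j, ((starRingEnd ℂ) (X i j) * (vecMulVec v1 (star v1)) i j)).re := by
          rw [Finset.mul_sum, Complex.re_sum]
          refine Finset.sum_congr rfl fun i _ => ?_
          rw [Finset.mul_sum, Complex.re_sum]
          exact Finset.sum_congr rfl fun j _ => by rw [this]
      _ = l1 * l1 := by
          rw [crossC v1, hv1dot, ← Complex.ofReal_mul, Complex.ofReal_re]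
  have hB0norm : ∑ i, ∑ j, ‖((l1 : ℂ) • vecMulVec v1 (star v1)) i j‖ ^ 2
      = l1 * l1 := by
    have : ∀ i j : Fin p, ‖((l1 : ℂ) • vecMulVec v1 (star v1)) i j‖ ^ 2
        = l1 ^ 2 * ‖(vecMulVec v1 (star v1)) i j‖ ^ 2 := by
      intro i j
      rw [Matrix.smul_apply, smul_eq_mul, norm_mul, mul_pow,
        Complex.norm_real, Real.norm_eq_abs, sq_abs]
    simp only [this, ← Finset.mul_sum]
    rw [normterm v1, hnv1]
    ring
  rw [expand, expand, hB0cross, hB0norm, crossRe g, normterm g]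
  nlinarith [sq_nonneg (t - l1), hRay, ht0, hl1]
end

section
/- Let C be a p×p Hermitian positive definite complex matrix, let R̂ be a p×p complex matrix, let a ∈ ℂ^p be nonzero, and let λ ≥ 0 be real. Set α = aᴴ C⁻¹ a (a positive real) and β = aᴴ C⁻¹ R̂ C⁻¹ a, and R = λ a aᴴ + C. Then R is Hermitian positive definite and log det(R) + tr(R⁻¹ R̂) = log det(C) + tr(C⁻¹ R̂) + log(1 + λα) − λβ/(1 + λα). Hence, up to terms independent of (λ, a), the negative log-likelihood contribution of one covariance matrix reduces to log(1 + λα) − λβ/(1 + λα). -/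
open Matrix
open scoped ComplexOrder

variable {p : ℕ}

lemma aux_smul_vmv (l : ℂ) (a b : Fin p → ℂ) :
    l • vecMulVec a b = vecMulVec (l • a) b := by
  ext i j; simp [vecMulVec_apply, mul_assoc]

lemma aux_vmv_mulVec (a b x : Fin p → ℂ) :
    vecMulVec a b *ᵥ x = (b ⬝ᵥ x) • a := by
  ext i
  simp [mulVec, vecMulVec_apply, dotProduct, Finset.mul_sum, mul_comm, mul_left_comm]

lemma aux_trace_vmv (a b : Fin p → ℂ) (M : Matrix (Fin p) (Fin p) ℂ) :
    (vecMulVec a b * M).trace = b ⬝ᵥ (M *ᵥ a) := by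
  simp only [trace, diag, mul_apply, vecMulVec_apply, dotProduct, mulVec]
  rw [Finset.sum_comm]
  congr 1; ext j
  rw [Finset.mul_sum]
  congr 1; ext i
  ring

lemma aux_key1 (a : Fin p → ℂ) (M : Matrix (Fin p) (Fin p) ℂ) :
    vecMulVec a (star a) * M * vecMulVec a (star a)
      = (star a ⬝ᵥ M *ᵥ a) • vecMulVec a (star a) := by
  ext i j
  simp only [mul_apply, vecMulVec_apply, Matrix.smul_apply, smul_eq_mul, dotProduct, mulVec,
    Finset.sum_mul, Finset.mul_sum]
  rw [Finset.sum_comm]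
  congr 1; ext k
  congr 1; ext m
  ring

lemma aux_psd (a : Fin p → ℂ) (l : ℝ) (hl : 0 ≤ l) :
    ((l : ℂ) • vecMulVec a (star a)).PosSemidef := by
  refine PosSemidef.of_dotProduct_mulVec_nonneg ?_ ?_
  · ext i j
    simp only [conjTranspose_apply, vecMulVec_apply, star_mul', star_smul, Matrix.smul_apply,
      Pi.star_apply, Complex.star_def, Complex.conj_conj, Complex.conj_ofReal,
      _root_.map_mul, smul_eq_mul]
    ring
  · intro x
    rw [smul_mulVec, aux_vmv_mulVec, dotProduct_smul, dotProduct_smul]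
    have hsx : star x ⬝ᵥ a = star (star a ⬝ᵥ x) := by
      simp [dotProduct, mul_comm]
    rw [smul_eq_mul, smul_eq_mul, hsx]
    rw [show (star a ⬝ᵥ x) * star (star a ⬝ᵥ x)
        = ((Complex.normSq (star a ⬝ᵥ x) : ℝ) : ℂ) from (Complex.mul_conj _)]
    rw [← Complex.ofReal_mul, Complex.zero_le_real]
    exact mul_nonneg hl (Complex.normSq_nonneg _)

/-- For `R = λ a aᴴ + C` with `C` Hermitian positive definite, `a ≠ 0` and `λ ≥ 0`:
`R` is Hermitian positive definite, and
`log det R + tr(R⁻¹ R̂) = log det C + tr(C⁻¹ R̂) + log(1 + λα) − λβ/(1 + λα)`,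
where `α = aᴴ C⁻¹ a` and `β = aᴴ C⁻¹ R̂ C⁻¹ a`. -/
theorem stmt13 (p : ℕ) (C : Matrix (Fin p) (Fin p) ℂ) (hC : C.PosDef)
    (Rh : Matrix (Fin p) (Fin p) ℂ) (a : Fin p → ℂ) (ha : a ≠ 0)
    (l : ℝ) (hl : 0 ≤ l)
    (R : Matrix (Fin p) (Fin p) ℂ) (hR : R = (l : ℂ) • vecMulVec a (star a) + C) :
    R.PosDef
    ∧ (Real.log R.det.re : ℂ) + (R⁻¹ * Rh).trace
      = (Real.log C.det.re : ℂ) + (C⁻¹ * Rh).trace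
        + (Real.log (1 + l * (star a ⬝ᵥ (C⁻¹ *ᵥ a)).re) : ℂ)
        - (l : ℂ) * (star a ⬝ᵥ ((C⁻¹ * Rh * C⁻¹) *ᵥ a))
            / ((1 + l * (star a ⬝ᵥ (C⁻¹ *ᵥ a)).re : ℝ) : ℂ) := by
  have hCu : IsUnit C.det := hC.det_pos.ne'.isUnit
  set V := vecMulVec a (star a) with hV
  -- positivity of R
  have hRpd : R.PosDef := by
    rw [hR]
    exact Matrix.PosDef.posSemidef_add (aux_psd a l hl) hC
  refine ⟨hRpd, ?_⟩
  -- alpha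
  have hα : 0 < star a ⬝ᵥ (C⁻¹ *ᵥ a) := hC.inv.dotProduct_mulVec_pos ha
  set αc : ℂ := star a ⬝ᵥ (C⁻¹ *ᵥ a) with hαc
  set αr : ℝ := αc.re with hαr
  have hαpos : 0 < αr := by
    rw [Complex.lt_def] at hα; exact hα.1
  have hαre : αc = (αr : ℂ) := by
    rw [Complex.lt_def] at hα
    exact Complex.ext rfl (by simp [hα.2.symm])
  set s : ℝ := 1 + l * αr with hs
  have hspos : 0 < s := by positivity
  set c : ℂ := ((l / s : ℝ) : ℂ) with hc
  have hcs : c * (s : ℂ) = (l : ℂ) := by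
    rw [← Complex.ofReal_mul, div_mul_cancel₀ _ hspos.ne']
  -- inverse formula
  set S : Matrix (Fin p) (Fin p) ℂ := C⁻¹ - c • (C⁻¹ * V * C⁻¹) with hS
  have hRS : R * S = 1 := by
    rw [hR, hS]
    have h1 : C * (C⁻¹ * V * C⁻¹) = V * C⁻¹ := by
      rw [← Matrix.mul_assoc, ← Matrix.mul_assoc, Matrix.mul_nonsing_inv _ hCu, Matrix.one_mul]
    have h2 : V * (C⁻¹ * V * C⁻¹) = αc • (V * C⁻¹) := by
      rw [← Matrix.mul_assoc, ← Matrix.mul_assoc, aux_key1, Matrix.smul_mul, hαc]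
    rw [Matrix.add_mul, Matrix.mul_sub, Matrix.mul_sub, Matrix.mul_nonsing_inv _ hCu,
      Matrix.smul_mul, Matrix.smul_mul, Matrix.mul_smul, Matrix.mul_smul, h1, h2]
    have hcoef : (l : ℂ) • (V * C⁻¹) - (l : ℂ) • c • αc • (V * C⁻¹) - c • (V * C⁻¹) = 0 := by
      rw [smul_smul, smul_smul, ← sub_smul, ← sub_smul]
      have : (l : ℂ) - (l : ℂ) * c * αc - c = 0 := by
        rw [hαre]
        have : (l : ℂ) * c * (αr : ℂ) + c = c * (s : ℂ) := by
          rw [hs]; push_cast; ring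
        linear_combination -this - hcs
      rw [this, zero_smul]
    have hfin : (l : ℂ) • (V * C⁻¹) - (l : ℂ) • c • αc • (V * C⁻¹) + (1 - c • (V * C⁻¹))
        = ((l : ℂ) • (V * C⁻¹) - (l : ℂ) • c • αc • (V * C⁻¹) - c • (V * C⁻¹)) + 1 := by abel
    rw [hfin, hcoef, zero_add]
  have hRinv : R⁻¹ = S := inv_eq_right_inv hRS
  -- trace
  have hβ : (C⁻¹ * V * C⁻¹ * Rh).trace = star a ⬝ᵥ ((C⁻¹ * Rh * C⁻¹) *ᵥ a) := by
    rw [Matrix.mul_assoc, Matrix.mul_assoc, trace_mul_comm, ← Matrix.mul_assoc,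
      Matrix.mul_assoc, Matrix.mul_assoc, ← Matrix.mul_assoc C⁻¹ Rh, aux_trace_vmv]
  have htr : (R⁻¹ * Rh).trace = (C⁻¹ * Rh).trace - c * (star a ⬝ᵥ ((C⁻¹ * Rh * C⁻¹) *ᵥ a)) := by
    rw [hRinv, hS, Matrix.sub_mul, Matrix.smul_mul, trace_sub, trace_smul, hβ, smul_eq_mul]
  -- determinant
  have hdet : R.det = C.det * (s : ℂ) := by
    rw [hR, aux_smul_vmv, vecMulVec_eq Unit, add_comm, det_add_mul _ _ hCu]
    congr 1
    rw [det_unique]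
    simp only [Matrix.add_apply, one_apply_eq, mul_apply, replicateRow_apply, replicateCol_apply, Finset.univ_unique,
      Finset.sum_singleton]
    have hsum : ∑ x, (∑ k, star a k * C⁻¹ k x) * ((l : ℂ) • a) x = (l : ℂ) * αc := by
      rw [hαc]
      simp only [Pi.smul_apply, smul_eq_mul, dotProduct, mulVec, Finset.mul_sum,
        Finset.sum_mul]
      rw [Finset.sum_comm]
      congr 1; ext x
      congr 1; ext k
      ring
    rw [hsum, hαre, hs]
    push_cast
    ring
  have hCdetre : C.det = ((C.det.re : ℝ) : ℂ) := by
    have := hC.det_pos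
    rw [Complex.lt_def] at this
    exact Complex.ext rfl (by simp [this.2.symm])
  have hCdpos : 0 < C.det.re := by
    have := hC.det_pos; rw [Complex.lt_def] at this; exact this.1
  have hRdetre : R.det.re = C.det.re * s := by
    rw [hdet, hCdetre]
    push_cast
    simp [← Complex.ofReal_mul]
  rw [hRdetre, Real.log_mul hCdpos.ne' hspos.ne', htr]
  have hcdiv : c = (l : ℂ) / ((s : ℝ) : ℂ) := by rw [hc]; push_cast; ring
  rw [hcdiv]
  push_cast
  ring
end

section
/- Let α > 0 and β be real numbers, and for λ > −1/α define f(λ) = log(1 + λα) − λβ/(1 + λα). Then f is differentiable with f′(λ) = (α + λα² − β)/(1 + λα)², and f′(λ) = 0 if and only if λ = (β − α)/α². In particular, for C a p×p Hermitian positive definite complex matrix, R̂ a p×p Hermitian complex matrix and a ∈ ℂ^p nonzero, with α = aᴴ C⁻¹ a and β = aᴴ C⁻¹ R̂ C⁻¹ a, the unique stationary point of the reduced single-source log-likelihood is λ̂ = aᴴ C⁻¹ (R̂ − C) C⁻¹ a / (aᴴ C⁻¹ a)². -/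
open Matrix
open scoped ComplexOrder

/-- For `α > 0`, `β ∈ ℝ` and `λ > −1/α`, the function
`f(λ) = log(1 + λα) − λβ/(1 + λα)` has derivative `(α + λα² − β)/(1 + λα)²`, which
vanishes iff `λ = (β − α)/α²`. In particular, with `α = aᴴC⁻¹a`, `β = aᴴC⁻¹R̂C⁻¹a` for
Hermitian positive definite `C`, Hermitian `R̂` and `a ≠ 0`, the unique stationary point
is `λ̂ = aᴴ C⁻¹ (R̂ − C) C⁻¹ a / (aᴴ C⁻¹ a)²`. -/
theorem stmt14 (α β : ℝ) (hα : 0 < α) (l : ℝ) (hl : -1 / α < l) :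
    HasDerivAt (fun x : ℝ => Real.log (1 + x * α) - x * β / (1 + x * α))
      ((α + l * α ^ 2 - β) / (1 + l * α) ^ 2) l
    ∧ ((α + l * α ^ 2 - β) / (1 + l * α) ^ 2 = 0 ↔ l = (β - α) / α ^ 2)
    ∧ (∀ (p : ℕ) (C Rh : Matrix (Fin p) (Fin p) ℂ) (a : Fin p → ℂ),
        C.PosDef → Rh.IsHermitian → a ≠ 0 →
        α = (star a ⬝ᵥ (C⁻¹ *ᵥ a)).re →
        β = (star a ⬝ᵥ ((C⁻¹ * Rh * C⁻¹) *ᵥ a)).re →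
        (β - α) / α ^ 2
          = (star a ⬝ᵥ ((C⁻¹ * (Rh - C) * C⁻¹) *ᵥ a)).re
              / ((star a ⬝ᵥ (C⁻¹ *ᵥ a)).re) ^ 2) := by
  have hpos : 0 < 1 + l * α := by
    have : -1 / α * α < l * α := by exact mul_lt_mul_of_pos_right hl hα
    have h1 : -1 / α * α = -1 := by field_simp
    nlinarith
  have hne : 1 + l * α ≠ 0 := ne_of_gt hpos
  refine ⟨?_, ?_, ?_⟩
  · have h1 : HasDerivAt (fun x : ℝ => 1 + x * α) α l := by
      simpa using ((hasDerivAt_id l).mul_const α).const_add 1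
    have hlog : HasDerivAt (fun x : ℝ => Real.log (1 + x * α)) (α / (1 + l * α)) l := by
      simpa using (h1.log hne)
    have hnum : HasDerivAt (fun x : ℝ => x * β) β l := by
      simpa using (hasDerivAt_id l).mul_const β
    have hdiv : HasDerivAt (fun x : ℝ => x * β / (1 + x * α))
        ((β * (1 + l * α) - l * β * α) / (1 + l * α) ^ 2) l := hnum.div h1 hne
    have : HasDerivAt (fun x : ℝ => Real.log (1 + x * α) - x * β / (1 + x * α)) _ l := hlog.sub hdiv
    convert this using 1
    field_simp
    ring
  · have hd : (1 + l * α) ^ 2 ≠ 0 := pow_ne_zero _ hne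
    rw [div_eq_zero_iff]
    constructor
    · rintro (h | h)
      · field_simp
        nlinarith
      · exact absurd h hd
    · intro h
      left
      have hα2 : α ^ 2 ≠ 0 := pow_ne_zero _ hα.ne'
      field_simp at h
      nlinarith
  · intro p C Rh a hC hRh ha hαdef hβdef
    have hCinv : C⁻¹ * C = 1 := nonsing_inv_mul C (isUnit_iff_ne_zero.mpr hC.det_pos.ne')
    have hkey : C⁻¹ * (Rh - C) * C⁻¹ = C⁻¹ * Rh * C⁻¹ - C⁻¹ := by
      rw [Matrix.mul_sub, Matrix.sub_mul, hCinv, Matrix.one_mul]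
    rw [hkey, Matrix.sub_mulVec, dotProduct_sub, Complex.sub_re, ← hαdef, ← hβdef]
end
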